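/- Let Φ be an m×d real matrix with restricted isometry constant δ_r. Let T ⊆ {1,…,d} be an index set and let x ∈ ℝ^d be a vector. Provided that r ≥ |T ∪ supp(x)|, we have ‖Φ_T* (Φ · x|_{T^c})‖₂ ≤ δ_r ‖x|_{T^c}‖₂. -/

import Mathlib

/-- The Euclidean (ℓ2) norm of a finitely-indexed real vector. -/
noncomputable def l2 {ι : Type*} [Fintype ι] (v : ι → ℝ) : ℝ :=
  Real.sqrt (∑ i, (v i) ^ 2)

/-- A vector is `s`-sparse if it has at most `s` nonzero coordinates. -/
def Sparse {d : ℕ} (s : ℕ) (v : Fin d → ℝ) : Prop :=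
  {i | v i ≠ 0}.ncard ≤ s

/-- `δ` is a restricted isometry constant of `Φ` at sparsity level `r`
(quadratic form). The restricted isometry constant `δ_r` is the smallest such `δ ≥ 0`. -/
def RICq {m d : ℕ} (Φ : Matrix (Fin m) (Fin d) ℝ) (r : ℕ) (δ : ℝ) : Prop :=
  ∀ v : Fin d → ℝ, Sparse r v →
    (1 - δ) * (l2 v) ^ 2 ≤ (l2 (Φ.mulVec v)) ^ 2 ∧
      (l2 (Φ.mulVec v)) ^ 2 ≤ (1 + δ) * (l2 v) ^ 2

/-- The column submatrix of `Φ` with columns indexed by `T`. -/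
def colSub {m d : ℕ} (Φ : Matrix (Fin m) (Fin d) ℝ) (T : Finset (Fin d)) :
    Matrix (Fin m) {j // j ∈ T} ℝ :=
  Matrix.of fun i j => Φ i j.1

lemma l2_sq {ι : Type*} [Fintype ι] (v : ι → ℝ) : l2 v ^ 2 = ∑ i, (v i) ^ 2 := by
  unfold l2
  exact Real.sq_sqrt (by positivity)

lemma sum_sq_expand {m : ℕ} (u v : Fin m → ℝ) :
    ∑ i, (u i + v i) ^ 2 =
      (∑ i, u i ^ 2) + 2 * (∑ i, u i * v i) + ∑ i, v i ^ 2 := by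
  rw [Finset.mul_sum, ← Finset.sum_add_distrib, ← Finset.sum_add_distrib]
  exact Finset.sum_congr rfl fun i _ => by ring

/-- If `δ ≥ 0` satisfies the restricted isometry inequalities at level
`r` (in particular for `δ = δ_r`) and `r ≥ |T ∪ supp(x)|`, then
`‖Φ_T* (Φ · x|_{T^c})‖₂ ≤ δ ‖x|_{T^c}‖₂`. -/
theorem stmt7 (m d r : ℕ) (Φ : Matrix (Fin m) (Fin d) ℝ)
    (δ : ℝ) (hδ0 : 0 ≤ δ) (hΦ : RICq Φ r δ)
    (T : Finset (Fin d)) (x : Fin d → ℝ)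
    (hr : (↑T ∪ {i | x i ≠ 0}).ncard ≤ r) :
    l2 ((colSub Φ T).transpose.mulVec
        (Φ.mulVec fun i => if i ∈ T then 0 else x i)) ≤
      δ * l2 (fun i => if i ∈ T then 0 else x i) := by
  classical
  set y : Fin d → ℝ := fun i => if i ∈ T then 0 else x i with hy
  set w : {j // j ∈ T} → ℝ := (colSub Φ T).transpose.mulVec (Φ.mulVec y) with hw
  set W : ℝ := ∑ j, (w j) ^ 2 with hW
  set Y : ℝ := ∑ i, (y i) ^ 2 with hY
  have hWnn : 0 ≤ W := Finset.sum_nonneg fun j _ => sq_nonneg _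
  have hYnn : 0 ≤ Y := Finset.sum_nonneg fun i _ => sq_nonneg _
  have hl2w : l2 w = Real.sqrt W := rfl
  have hl2y : l2 y = Real.sqrt Y := rfl
  -- Key inner-product bound for any z supported in T
  have key : ∀ z : Fin d → ℝ, (∀ i, i ∉ T → z i = 0) →
      ∑ i, Φ.mulVec z i * Φ.mulVec y i ≤ δ * ((∑ i, z i ^ 2) + Y) / 2 := by
    intro z hz
    have hzy : ∀ i, z i * y i = 0 := by
      intro i
      by_cases hi : i ∈ T
      · simp [hy, hi]
      · simp [hz i hi]
    have hsp : ∀ s : ℝ, Sparse r (fun i => z i + s * y i) := by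
      intro s
      have hsub : {i | z i + s * y i ≠ 0} ⊆ ↑T ∪ {i | x i ≠ 0} := by
        intro i hi
        by_contra h
        simp only [Set.mem_union, Finset.mem_coe, Set.mem_setOf_eq, not_or, not_not] at h
        have hyi : y i = 0 := by simp [hy, h.2]
        exact hi (by simp [hz i h.1, hyi])
      exact le_trans (Set.ncard_le_ncard hsub (Set.toFinite _)) hr
    have hzadd : ∀ s : ℝ, (fun i => z i + s * y i) = z + s • y := by
      intro s; funext i; simp
    have hnorm : ∀ s : ℝ,
        ∑ i, (z i + s * y i) ^ 2 = (∑ i, z i ^ 2) + s ^ 2 * Y := by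
      intro s
      have := sum_sq_expand z (fun i => s * y i)
      simp only [mul_pow] at this
      rw [this]
      have h0 : ∑ i, z i * (s * y i) = 0 := by
        apply Finset.sum_eq_zero
        intro i _
        rw [mul_left_comm, hzy i, mul_zero]
      rw [h0, ← Finset.mul_sum, hY]
      ring
    have hmv : ∀ s : ℝ, Φ.mulVec (fun i => z i + s * y i) =
        fun i => Φ.mulVec z i + s * Φ.mulVec y i := by
      intro s
      rw [hzadd]
      funext i
      rw [Matrix.mulVec_add, Matrix.mulVec_smul]
      simp
    have h1 := (hΦ _ (hsp 1)).2
    have h2 := (hΦ _ (hsp (-1))).1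
    rw [l2_sq, l2_sq, hmv, hnorm] at h1
    rw [l2_sq, l2_sq, hmv, hnorm] at h2
    have e1 : ∑ i, (Φ.mulVec z i + 1 * Φ.mulVec y i) ^ 2
        = (∑ i, Φ.mulVec z i ^ 2) + 2 * (∑ i, Φ.mulVec z i * Φ.mulVec y i)
          + ∑ i, Φ.mulVec y i ^ 2 := by
      have := sum_sq_expand (Φ.mulVec z) (fun i => 1 * Φ.mulVec y i)
      simpa using this
    have e2 : ∑ i, (Φ.mulVec z i + (-1) * Φ.mulVec y i) ^ 2
        = (∑ i, Φ.mulVec z i ^ 2) - 2 * (∑ i, Φ.mulVec z i * Φ.mulVec y i)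
          + ∑ i, Φ.mulVec y i ^ 2 := by
      have := sum_sq_expand (Φ.mulVec z) (fun i => (-1) * Φ.mulVec y i)
      rw [this]
      rw [show ∑ i, Φ.mulVec z i * (-1 * Φ.mulVec y i)
          = -∑ i, Φ.mulVec z i * Φ.mulVec y i by
        rw [← Finset.sum_neg_distrib]
        exact Finset.sum_congr rfl fun i _ => by ring]
      have : ∑ i, (-1 * Φ.mulVec y i) ^ 2 = ∑ i, Φ.mulVec y i ^ 2 :=
        Finset.sum_congr rfl fun i _ => by ring
      rw [this]
      ring
    rw [e1] at h1
    rw [e2] at h2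
    nlinarith [h1, h2]
  -- dot product formula
  have hC : ∀ (z : Fin d → ℝ) (g : Fin m → ℝ),
      ∑ i, Φ.mulVec z i * g i = ∑ j, z j * Φ.transpose.mulVec g j := by
    intro z g
    simp only [Matrix.mulVec, dotProduct, Matrix.transpose_apply,
      Finset.sum_mul, Finset.mul_sum]
    rw [Finset.sum_comm]
    exact Finset.sum_congr rfl fun j _ => Finset.sum_congr rfl fun i _ => by ring
  have hwj : ∀ (j : Fin d) (h : j ∈ T),
      Φ.transpose.mulVec (Φ.mulVec y) j = w ⟨j, h⟩ := by
    intro j h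
    simp only [hw, colSub, Matrix.mulVec, dotProduct, Matrix.transpose_apply,
      Matrix.of_apply]
  by_cases hW0 : W = 0
  · rw [hl2w, hW0, Real.sqrt_zero]
    exact mul_nonneg hδ0 (Real.sqrt_nonneg _)
  · have hWpos : 0 < W := lt_of_le_of_ne hWnn (Ne.symm hW0)
    have hYpos : 0 < Y := by
      rcases lt_or_eq_of_le hYnn with h | h
      · exact h
      · exfalso
        have hy0 : y = 0 := by
          funext i
          have := (Finset.sum_eq_zero_iff_of_nonneg
            (fun i _ => sq_nonneg (y i))).mp h.symm i (Finset.mem_univ i)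
          exact pow_eq_zero_iff (by norm_num) |>.mp this
        apply hW0
        rw [hW]
        apply Finset.sum_eq_zero
        intro j _
        rw [hw, hy0]
        simp [Matrix.mulVec_zero]
    set a : ℝ := Real.sqrt W with ha
    set b : ℝ := Real.sqrt Y with hb
    have hapos : 0 < a := Real.sqrt_pos.mpr hWpos
    have hbpos : 0 < b := Real.sqrt_pos.mpr hYpos
    have ha2 : a ^ 2 = W := Real.sq_sqrt hWnn
    have hb2 : b ^ 2 = Y := Real.sq_sqrt hYnn
    set c : ℝ := b / a with hc
    set z : Fin d → ℝ := fun i => if h : i ∈ T then c * w ⟨i, h⟩ else 0 with hz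
    have hzsupp : ∀ i, i ∉ T → z i = 0 := by
      intro i hi; simp [hz, hi]
    -- compute the inner product for this z
    have hinner : ∑ i, Φ.mulVec z i * Φ.mulVec y i = c * W := by
      rw [hC z (Φ.mulVec y)]
      rw [← Finset.sum_subset (Finset.subset_univ T)
        (fun j _ hj => by simp [hz, dif_neg hj])]
      rw [Finset.sum_subtype T (fun j => Iff.rfl)
        (fun j => z j * Φ.transpose.mulVec (Φ.mulVec y) j)]
      rw [hW, Finset.mul_sum]
      apply Finset.sum_congr rfl
      intro j _
      rw [hwj j.1 j.2]
      simp only [hz, dif_pos j.2, Subtype.coe_eta]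
      ring
    have hzsq : ∑ i, z i ^ 2 = c ^ 2 * W := by
      rw [← Finset.sum_subset (Finset.subset_univ T)
        (fun j _ hj => by simp [hz, dif_neg hj])]
      rw [Finset.sum_subtype T (fun j => Iff.rfl) (fun j => z j ^ 2)]
      rw [hW, Finset.mul_sum]
      apply Finset.sum_congr rfl
      intro j _
      simp only [hz, dif_pos j.2, Subtype.coe_eta]
      ring
    have hk := key z hzsupp
    rw [hinner, hzsq] at hk
    -- hk : c * W ≤ δ * (c ^ 2 * W + Y) / 2
    have hcW : c * W = a * b := by
      rw [hc, ← ha2]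
      field_simp
    have hc2W : c ^ 2 * W = Y := by
      rw [hc, ← ha2, ← hb2]
      field_simp
    rw [hcW, hc2W] at hk
    -- hk : a * b ≤ δ * (Y + Y) / 2
    rw [hl2w, hl2y]
    have : a * b ≤ (δ * b) * b := by nlinarith [hb2]
    exact le_of_mul_le_mul_right this hbpos
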